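/- Let E be a finite set. For every binary delta-matroid B on the ground set E there exists a Lagrangian subspace L ⊆ V_E with ν_E(L) = B. -/
import Mathlib


open Finset
open scoped symmDiff

variable {E : Type*} [Fintype E] [DecidableEq E]

/-- The symplectic vector space `V_E = (E → 𝔽₂) × (E → 𝔽₂)`. -/
abbrev V (E : Type*) : Type _ := (E → ZMod 2) × (E → ZMod 2)

/-- Basis vector `e`. -/
def baseV (e : E) : V E := (Pi.single e 1, 0)

/-- Basis vector `e^∨`. -/
def dualV (e : E) : V E := (0, Pi.single e 1)

/-- The symplectic form on `V E`. -/
def omegaForm (u v : V E) : ZMod 2 := ∑ e, (u.1 e * v.2 e + u.2 e * v.1 e)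

/-- A subspace is Lagrangian if the form vanishes on it and its dimension is `|E|`. -/
def IsLagrangian (L : Submodule (ZMod 2) (V E)) : Prop :=
  (∀ u ∈ L, ∀ v ∈ L, omegaForm u v = 0) ∧
    Module.finrank (ZMod 2) L = Fintype.card E

/-- The span of `{e^∨ : e ∈ Y} ∪ {e : e ∈ E \ Y}`. -/
def coordSpan (Y : Finset E) : Submodule (ZMod 2) (V E) :=
  Submodule.span (ZMod 2)
    ((fun e => dualV e) '' (Y : Set E) ∪ (fun e => baseV e) '' ((Yᶜ : Finset E) : Set E))

/-- `Y` is feasible for `L` iff `L ∩ ⟨Y^∨ ⊔ (E \ Y)⟩ = 0`. -/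
def Feasible (L : Submodule (ZMod 2) (V E)) (Y : Finset E) : Prop :=
  L ⊓ coordSpan Y = ⊥

/-- The set system `ν_E(L)`. -/
def nu (L : Submodule (ZMod 2) (V E)) : Set (Finset E) := {Y | Feasible L Y}

/-- The nondegeneracy set system of a matrix `A`. -/
def Phi (A : Matrix E E (ZMod 2)) : Set (Finset E) :=
  {U : Finset E | IsUnit (A.submatrix (fun i : ↥U => (i : E)) (fun j : ↥U => (j : E))).det}

/-- The symmetric exchange axiom. -/
def SEAxiom (Φ : Set (Finset E)) : Prop :=
  ∀ φ₁ ∈ Φ, ∀ φ₂ ∈ Φ, ∀ e ∈ φ₁ ∆ φ₂, ∃ e' ∈ φ₁ ∆ φ₂, φ₁ ∆ ({e, e'} : Finset E) ∈ Φ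

/-- Binary delta-matroid: a twist of a nondegeneracy set system. -/
def IsBinaryDM (Φ : Set (Finset E)) : Prop :=
  ∃ (A : Matrix E E (ZMod 2)) (E' : Finset E), A.IsSymm ∧ Φ = (· ∆ E') '' Phi A

/-- The involution `σ_e` swapping `e` and `e^∨`. -/
def sigmaE (e : E) : V E →ₗ[ZMod 2] V E where
  toFun u := (fun f => if f = e then u.2 f else u.1 f, fun f => if f = e then u.1 f else u.2 f)
  map_add' u v := by ext f <;> dsimp <;> split <;> rfl
  map_smul' c u := by ext f <;> dsimp <;> split <;> rfl

/-- Composition of the `σ_e` over `e ∈ E'`. -/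
def sigmaSet (E' : Finset E) : V E →ₗ[ZMod 2] V E where
  toFun u := (fun f => if f ∈ E' then u.2 f else u.1 f, fun f => if f ∈ E' then u.1 f else u.2 f)
  map_add' u v := by ext f <;> dsimp <;> split <;> rfl
  map_smul' c u := by ext f <;> dsimp <;> split <;> rfl

/-- A Lagrangian subspace is graphic if for every `e` there is `v_e ∈ L` with
`ω(v_e,e)=1` and `ω(v_e,e')=0` for `e' ≠ e`. -/
def IsGraphic (L : Submodule (ZMod 2) (V E)) : Prop :=
  ∀ e : E, ∃ v ∈ L, omegaForm v (baseV e) = 1 ∧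
    ∀ e' : E, e' ≠ e → omegaForm v (baseV e') = 0

/-- The vector `e^∨ + Σ_{e'} A_{e,e'} e'`. -/
def rowVec (A : Matrix E E (ZMod 2)) (e : E) : V E := (A e, Pi.single e 1)

/-- The subspace spanned by the vectors `rowVec A e`, `e ∈ E`. -/
def graphOf (A : Matrix E E (ZMod 2)) : Submodule (ZMod 2) (V E) :=
  Submodule.span (ZMod 2) (Set.range (rowVec A))

/-- The first Vassiliev move: `e^∨ ↦ e^∨ + e'`, `e'^∨ ↦ e'^∨ + e`, fixing other basis vectors. -/
def vassiliev1 (e e' : E) : V E →ₗ[ZMod 2] V E where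
  toFun u := (fun f => u.1 f + (if f = e' then u.2 e else 0) + (if f = e then u.2 e' else 0), u.2)
  map_add' u v := by ext f <;> dsimp <;> split_ifs <;> ring
  map_smul' c u := by ext f <;> dsimp <;> split_ifs <;> ring

section Aux

variable {E : Type*} [Fintype E] [DecidableEq E]

lemma omegaForm_add_left (u u' v : V E) :
    omegaForm (u + u') v = omegaForm u v + omegaForm u' v := by
  simp only [omegaForm, Prod.fst_add, Prod.snd_add, Pi.add_apply]
  rw [← Finset.sum_add_distrib]
  congr 1; ext f; ring

lemma omegaForm_add_right (u v v' : V E) :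
    omegaForm u (v + v') = omegaForm u v + omegaForm u v' := by
  simp only [omegaForm, Prod.fst_add, Prod.snd_add, Pi.add_apply]
  rw [← Finset.sum_add_distrib]
  congr 1; ext f; ring

lemma omegaForm_smul_left (c : ZMod 2) (u v : V E) :
    omegaForm (c • u) v = c * omegaForm u v := by
  simp only [omegaForm, Prod.smul_fst, Prod.smul_snd, Pi.smul_apply, smul_eq_mul,
    Finset.mul_sum]
  congr 1; ext f; ring

lemma omegaForm_smul_right (c : ZMod 2) (u v : V E) :
    omegaForm u (c • v) = c * omegaForm u v := by
  simp only [omegaForm, Prod.smul_fst, Prod.smul_snd, Pi.smul_apply, smul_eq_mul,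
    Finset.mul_sum]
  congr 1; ext f; ring

lemma mem_coordSpan_iff (U : Finset E) (v : V E) :
    v ∈ coordSpan U ↔ (∀ f ∈ U, v.1 f = 0) ∧ (∀ f ∉ U, v.2 f = 0) := by
  constructor
  · intro hv
    induction hv using Submodule.span_induction with
    | mem x hx =>
      rcases hx with ⟨e, he, rfl⟩ | ⟨e, he, rfl⟩
      · refine ⟨fun f _ => rfl, fun f hf => ?_⟩
        simp only [dualV]
        exact Pi.single_eq_of_ne (fun h => hf (by rwa [h])) 1
      · simp only [Finset.coe_compl, Set.mem_compl_iff, Finset.mem_coe] at he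
        refine ⟨fun f hf => ?_, fun f _ => rfl⟩
        simp only [baseV]
        exact Pi.single_eq_of_ne (fun h => he (by rwa [← h])) 1
    | zero => exact ⟨fun _ _ => rfl, fun _ _ => rfl⟩
    | add x y _ _ hx hy =>
      exact ⟨fun f hf => by simp [hx.1 f hf, hy.1 f hf],
        fun f hf => by simp [hx.2 f hf, hy.2 f hf]⟩
    | smul c x _ hx =>
      exact ⟨fun f hf => by simp [hx.1 f hf], fun f hf => by simp [hx.2 f hf]⟩
  · rintro ⟨h1, h2⟩
    have : v = ∑ f : E, (if f ∈ U then v.2 f • dualV f else v.1 f • baseV f) := by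
      ext g
      · simp only [Prod.fst_sum, Finset.sum_apply]
        rw [Finset.sum_eq_single g]
        · by_cases hg : g ∈ U
          · simp [hg, dualV, h1 g hg]
          · simp [hg, baseV]
        · intro b _ hb
          by_cases hbU : b ∈ U <;> simp [hbU, dualV, baseV, Pi.single_eq_of_ne hb.symm]
        · simp
      · simp only [Prod.snd_sum, Finset.sum_apply]
        rw [Finset.sum_eq_single g]
        · by_cases hg : g ∈ U
          · simp [hg, dualV]
          · simp [hg, baseV, h2 g hg]
        · intro b _ hb
          by_cases hbU : b ∈ U <;> simp [hbU, dualV, baseV, Pi.single_eq_of_ne hb.symm]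
        · simp
    rw [this]
    refine Submodule.sum_mem _ fun f _ => ?_
    by_cases hf : f ∈ U
    · simp only [hf, if_true]
      exact Submodule.smul_mem _ _ (Submodule.subset_span (Or.inl ⟨f, hf, rfl⟩))
    · simp only [hf, if_false]
      exact Submodule.smul_mem _ _ (Submodule.subset_span (Or.inr ⟨f, by simp [hf], rfl⟩))

end Aux

section Aux2
open Matrix
variable {E : Type*} [Fintype E] [DecidableEq E]

lemma mem_graphOf_iff (A : Matrix E E (ZMod 2)) (v : V E) :
    v ∈ graphOf A ↔ v.1 = v.2 ᵥ* A := by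
  constructor
  · intro hv
    induction hv using Submodule.span_induction with
    | mem x hx =>
      rcases hx with ⟨e, rfl⟩
      ext f
      simp [rowVec, Matrix.vecMul, dotProduct, Pi.single_apply]
    | zero => simp
    | add x y _ _ hx hy => simp [Prod.fst_add, Prod.snd_add, hx, hy, Matrix.add_vecMul]
    | smul c x _ hx => simp [hx, Matrix.smul_vecMul]
  · intro h
    have : v = ∑ e : E, v.2 e • rowVec A e := by
      ext g
      · simp only [Prod.fst_sum, Finset.sum_apply, rowVec, Pi.smul_apply, smul_eq_mul,
          Prod.smul_fst]
        rw [h]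
        simp [Matrix.vecMul, dotProduct]
      · simp only [Prod.snd_sum, Finset.sum_apply, rowVec, Pi.smul_apply, smul_eq_mul,
          Prod.smul_snd]
        rw [Finset.sum_eq_single g]
        · simp
        · intro b _ hb; simp [Pi.single_eq_of_ne hb.symm]
        · simp
    rw [this]
    exact Submodule.sum_mem _ fun e _ =>
      Submodule.smul_mem _ _ (Submodule.subset_span ⟨e, rfl⟩)

lemma vecMul_submatrix_eq (A : Matrix E E (ZMod 2)) (U : Finset E) (c : E → ZMod 2)
    (hc : ∀ f ∉ U, c f = 0) (g : E) (hg : g ∈ U) :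
    ((fun i : ↥U => c i) ᵥ* A.submatrix (fun i : ↥U => (i : E)) (fun j : ↥U => (j : E)))
      ⟨g, hg⟩ = (c ᵥ* A) g := by
  simp only [Matrix.vecMul, dotProduct, Matrix.submatrix_apply]
  rw [Finset.sum_coe_sort U (fun i => c i * A i g)]
  refine Finset.sum_subset (Finset.subset_univ U) fun i _ hi => ?_
  simp [hc i hi]

lemma feasible_graphOf_iff (A : Matrix E E (ZMod 2)) (U : Finset E) :
    Feasible (graphOf A) U ↔ U ∈ Phi A := by
  rw [Feasible, Phi, Set.mem_setOf_eq, isUnit_iff_ne_zero, Ne,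
    ← Matrix.exists_vecMul_eq_zero_iff, Submodule.eq_bot_iff]
  constructor
  · intro h
    rintro ⟨w, hw, hwA⟩
    set c : E → ZMod 2 := fun f => if hf : f ∈ U then w ⟨f, hf⟩ else 0 with hc
    have hcU : ∀ f ∉ U, c f = 0 := fun f hf => by simp [hc, hf]
    have hcw : (fun i : ↥U => c i) = w := by
      funext i; simp [hc, i.2]
    have hv : ((c ᵥ* A, c) : V E) ∈ graphOf A ⊓ coordSpan U := by
      refine ⟨(mem_graphOf_iff A _).mpr rfl, (mem_coordSpan_iff U _).mpr ⟨?_, hcU⟩⟩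
      intro g hg
      have := vecMul_submatrix_eq A U c hcU g hg
      rw [hcw, hwA] at this
      exact this.symm.trans rfl
    have := h _ hv
    apply hw
    funext i
    have : c i = 0 := congrFun (congrArg Prod.snd this) i
    rw [← hcw]; exact this
  · intro h v hv
    rw [Submodule.mem_inf, mem_graphOf_iff, mem_coordSpan_iff] at hv
    obtain ⟨h1, h2, h3⟩ := hv
    have hw : (fun i : ↥U => v.2 i) = 0 := by
      by_contra hne
      refine h ⟨_, hne, ?_⟩
      funext g
      rw [vecMul_submatrix_eq A U v.2 h3 g g.2, ← h1]
      exact h2 g g.2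
    have hv2 : v.2 = 0 := by
      funext f
      by_cases hf : f ∈ U
      · exact congrFun hw ⟨f, hf⟩
      · exact h3 f hf
    have hv1 : v.1 = 0 := by rw [h1, hv2]; simp
    exact Prod.ext hv1 hv2

end Aux2

section Aux3
variable {E : Type*} [Fintype E] [DecidableEq E]

lemma sigmaSet_involutive (E' : Finset E) : Function.Involutive (sigmaSet (E := E) E') := by
  intro u
  ext f <;> simp only [sigmaSet, LinearMap.coe_mk, AddHom.coe_mk] <;> split <;> rfl

/-- `sigmaSet` as a linear equivalence. -/
def sigmaEquiv (E' : Finset E) : V E ≃ₗ[ZMod 2] V E :=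
  LinearEquiv.ofInvolutive (sigmaSet E') (sigmaSet_involutive E')

lemma omega_sigma (E' : Finset E) (u v : V E) :
    omegaForm (sigmaSet E' u) (sigmaSet E' v) = omegaForm u v := by
  unfold omegaForm
  refine Finset.sum_congr rfl fun f _ => ?_
  simp only [sigmaSet, LinearMap.coe_mk, AddHom.coe_mk]
  split <;> ring

lemma sigma_mem_coordSpan (E' Y : Finset E) (v : V E) :
    sigmaSet E' v ∈ coordSpan Y ↔ v ∈ coordSpan (Y ∆ E') := by
  rw [mem_coordSpan_iff, mem_coordSpan_iff]
  simp only [sigmaSet, LinearMap.coe_mk, AddHom.coe_mk]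
  constructor
  · rintro ⟨h1, h2⟩
    constructor
    · intro f hf
      rw [Finset.mem_symmDiff] at hf
      rcases hf with ⟨hY, hE⟩ | ⟨hE, hY⟩
      · have := h1 f hY; simpa [hE] using this
      · have := h2 f hY; simpa [hE] using this
    · intro f hf
      rw [Finset.mem_symmDiff] at hf
      push_neg at hf
      by_cases hY : f ∈ Y
      · have hE := hf.1 hY
        have := h1 f hY; simpa [hE] using this
      · have hE : f ∉ E' := fun hE => hY (hf.2 hE)
        have := h2 f hY; simpa [hE] using this
  · rintro ⟨h1, h2⟩
    constructor
    · intro f hY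
      by_cases hE : f ∈ E'
      · have hf : f ∉ Y ∆ E' := by
          rw [Finset.mem_symmDiff]; push_neg
          exact ⟨fun _ => hE, fun _ => hY⟩
        have := h2 f hf; simpa [hE] using this
      · have hf : f ∈ Y ∆ E' := Finset.mem_symmDiff.mpr (Or.inl ⟨hY, hE⟩)
        have := h1 f hf; simpa [hE] using this
    · intro f hY
      by_cases hE : f ∈ E'
      · have hf : f ∈ Y ∆ E' := Finset.mem_symmDiff.mpr (Or.inr ⟨hE, hY⟩)
        have := h1 f hf; simpa [hE] using this
      · have hf : f ∉ Y ∆ E' := by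
          rw [Finset.mem_symmDiff]; push_neg
          exact ⟨fun h => absurd h hY, fun h => absurd h hE⟩
        have := h2 f hf; simpa [hE] using this

lemma feasible_map_sigma (E' : Finset E) (L0 : Submodule (ZMod 2) (V E)) (Y : Finset E) :
    Feasible (L0.map (sigmaSet E')) Y ↔ Feasible L0 (Y ∆ E') := by
  rw [Feasible, Feasible, Submodule.eq_bot_iff, Submodule.eq_bot_iff]
  constructor
  · intro h v hv
    rw [Submodule.mem_inf] at hv
    have hx : sigmaSet E' v ∈ L0.map (sigmaSet E') ⊓ coordSpan Y := by
      rw [Submodule.mem_inf]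
      exact ⟨⟨v, hv.1, rfl⟩, (sigma_mem_coordSpan E' Y v).mpr hv.2⟩
    have h0 := h _ hx
    have := congrArg (sigmaSet E') h0
    rwa [sigmaSet_involutive E' v, map_zero] at this
  · intro h x hx
    rw [Submodule.mem_inf] at hx
    obtain ⟨⟨v, hv, rfl⟩, hxc⟩ := hx
    rw [sigma_mem_coordSpan] at hxc
    rw [h v (Submodule.mem_inf.mpr ⟨hv, hxc⟩), map_zero]

lemma rowVec_li (A : Matrix E E (ZMod 2)) : LinearIndependent (ZMod 2) (rowVec A) := by
  have h1 : LinearIndependent (ZMod 2) (⇑(Pi.basisFun (ZMod 2) E)) :=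
    (Pi.basisFun (ZMod 2) E).linearIndependent
  have h2 : (fun e => (LinearMap.snd (ZMod 2) (E → ZMod 2) (E → ZMod 2)) (rowVec A e)) =
      ⇑(Pi.basisFun (ZMod 2) E) := by
    funext e; simp [rowVec, Pi.basisFun_apply]
  exact LinearIndependent.of_comp _ (h2 ▸ h1)

lemma omega_graphOf {A : Matrix E E (ZMod 2)} (hA : A.IsSymm) :
    ∀ u ∈ graphOf A, ∀ v ∈ graphOf A, omegaForm u v = 0 := by
  have base : ∀ e f, omegaForm (rowVec A e) (rowVec A f) = 0 := by
    intro e f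
    have hsym : A f e = A e f := by
      conv_lhs => rw [← hA]
      rfl
    unfold omegaForm rowVec
    have : ∀ g : E, (A e g * (Pi.single f 1 : E → ZMod 2) g + (Pi.single e 1 : E → ZMod 2) g * A f g) =
        (if g = f then A e g else 0) + (if g = e then A f g else 0) := by
      intro g
      by_cases hgf : g = f <;> by_cases hge : g = e <;>
        simp [hgf, hge, Pi.single_apply]
    rw [Finset.sum_congr rfl fun g _ => this g, Finset.sum_add_distrib,
      Finset.sum_ite_eq' Finset.univ f, Finset.sum_ite_eq' Finset.univ e]
    simp only [Finset.mem_univ, if_true, hsym]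
    exact CharTwo.add_self_eq_zero _
  have inner : ∀ e, ∀ v ∈ graphOf A, omegaForm (rowVec A e) v = 0 := by
    intro e v hv
    induction hv using Submodule.span_induction with
    | mem x hx => obtain ⟨f, rfl⟩ := hx; exact base e f
    | zero => simp [omegaForm]
    | add x y _ _ hx hy => rw [omegaForm_add_right, hx, hy, add_zero]
    | smul c x _ hx => rw [omegaForm_smul_right, hx, mul_zero]
  intro u hu v hv
  induction hu using Submodule.span_induction with
  | mem x hx => obtain ⟨e, rfl⟩ := hx; exact inner e v hv
  | zero => simp [omegaForm]
  | add x y _ _ hx hy => rw [omegaForm_add_left, hx, hy, add_zero]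
  | smul c x _ hx => rw [omegaForm_smul_left, hx, mul_zero]

end Aux3

/-- every binary delta-matroid on `E` is `ν_E(L)` for some Lagrangian `L`. -/
theorem stmt4 (B : Set (Finset E)) (hB : IsBinaryDM B) :
    ∃ L : Submodule (ZMod 2) (V E), IsLagrangian L ∧ nu L = B := by
  obtain ⟨A, E', hA, rfl⟩ := hB
  refine ⟨(graphOf A).map (sigmaSet E'), ⟨?_, ?_⟩, ?_⟩
  · rintro u ⟨u0, hu0, rfl⟩ v ⟨v0, hv0, rfl⟩
    rw [omega_sigma]
    exact omega_graphOf hA u0 hu0 v0 hv0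
  · have hcoe : (sigmaSet E' : V E →ₗ[ZMod 2] V E) = (sigmaEquiv E' : V E ≃ₗ[ZMod 2] V E) := rfl
    rw [hcoe, LinearEquiv.finrank_map_eq]
    exact finrank_span_eq_card (rowVec_li A)
  · ext Y
    simp only [nu, Set.mem_setOf_eq]
    rw [feasible_map_sigma, feasible_graphOf_iff]
    constructor
    · intro h
      exact ⟨Y ∆ E', h, symmDiff_symmDiff_cancel_right E' Y⟩
    · rintro ⟨U, hU, rfl⟩
      rwa [symmDiff_symmDiff_cancel_right]
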